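/- Let Q be a unitary on (C^2)^{⊗(l+1)} that commutes with ⊗_{j=1}^{l+1} X^{x_j} for every x ∈ {0,1}^{l+1}. Then for any z ∈ {0,1}^{l+1}, the probability Tr[|z⟩⟨z| · Q (|0⟩⟨0| ⊗ (I/2)^{⊗l}) Q†] equals (1/2^l) · Tr[(|z₁⟩⟨z₁| ⊗ I^{⊗l}) · Q (|0⟩⟨0|)^{⊗(l+1)} Q†]; in particular it depends on z only through its first bit z₁. -/

import Mathlib

open Matrix

/-- If a unitary `Q` on `(l+1)` qubits commutes with every tensor product of
Pauli `X`'s, then the DQC1 output probability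
`Tr[|z⟩⟨z| Q (|0⟩⟨0| ⊗ (I/2)^{⊗l}) Q†]` equals
`(1/2^l) Tr[(|z₁⟩⟨z₁| ⊗ I^{⊗l}) Q (|0⟩⟨0|)^{⊗(l+1)} Q†]`;
in particular it depends on `z` only through its first bit. -/
theorem stmt6 (l : ℕ)
    (Q : Matrix (Fin (l + 1) → Fin 2) (Fin (l + 1) → Fin 2) ℂ)
    (hQ : Q ∈ Matrix.unitaryGroup (Fin (l + 1) → Fin 2) ℂ)
    (Xop : (Fin (l + 1) → Fin 2) →
      Matrix (Fin (l + 1) → Fin 2) (Fin (l + 1) → Fin 2) ℂ)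
    (hXop : ∀ x, Xop x = fun a b => if a = (fun j => b j + x j) then (1 : ℂ) else 0)
    (hcomm : ∀ x : Fin (l + 1) → Fin 2, Q * Xop x = Xop x * Q)
    (ρ : Matrix (Fin (l + 1) → Fin 2) (Fin (l + 1) → Fin 2) ℂ)
    (hρ : ρ = ((2 : ℂ) ^ l)⁻¹ •
      Matrix.diagonal (fun x => if x 0 = 0 then (1 : ℂ) else 0))
    (ket00 : Matrix (Fin (l + 1) → Fin 2) (Fin (l + 1) → Fin 2) ℂ)
    (hket00 : ket00 = Matrix.single (fun _ => 0) (fun _ => 0) (1 : ℂ)) :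
    (∀ z : Fin (l + 1) → Fin 2,
      (Matrix.single z z (1 : ℂ) * (Q * ρ * Qᴴ)).trace
        = ((2 : ℂ) ^ l)⁻¹ *
          ((Matrix.diagonal fun x : Fin (l + 1) → Fin 2 => if x 0 = z 0 then (1 : ℂ) else 0) *
            (Q * ket00 * Qᴴ)).trace) ∧
    (∀ z z' : Fin (l + 1) → Fin 2, z 0 = z' 0 →
      (Matrix.single z z (1 : ℂ) * (Q * ρ * Qᴴ)).trace
        = (Matrix.single z' z' (1 : ℂ) * (Q * ρ * Qᴴ)).trace) := by
  -- key identity from the commutation hypothesis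
  have key : ∀ a b x : Fin (l + 1) → Fin 2,
      Q a (fun j => b j + x j) = Q (fun j => a j + x j) b := by
    intro a b x
    have h := congrFun (congrFun (hcomm x) a) b
    rw [Matrix.mul_apply, Matrix.mul_apply] at h
    have hiff : ∀ c : Fin (l + 1) → Fin 2,
        (a = fun j => c j + x j) ↔ (c = fun j => a j + x j) := by
      intro c
      have h2 : ∀ p q r : Fin 2, p = q + r ↔ q = p + r := by decide
      constructor <;> intro h <;> funext j
      · exact (h2 (a j) (c j) (x j)).1 (congrFun h j)
      · exact (h2 (c j) (a j) (x j)).1 (congrFun h j)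
    simp only [Matrix.mul_apply, hXop, mul_ite, mul_one, mul_zero, ite_mul, one_mul, zero_mul,
      hiff, Finset.sum_ite_eq', Finset.mem_univ, if_true] at h
    exact h
  -- part 1
  have part1 : ∀ z : Fin (l + 1) → Fin 2,
      (Matrix.single z z (1 : ℂ) * (Q * ρ * Qᴴ)).trace
        = ((2 : ℂ) ^ l)⁻¹ *
          ((Matrix.diagonal fun x : Fin (l + 1) → Fin 2 => if x 0 = z 0 then (1 : ℂ) else 0) *
            (Q * ket00 * Qᴴ)).trace := by
    intro z
    have hL : (Matrix.single z z (1 : ℂ) * (Q * ρ * Qᴴ)).trace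
        = ((2 : ℂ) ^ l)⁻¹ * ∑ y : Fin (l + 1) → Fin 2,
            (if y 0 = 0 then (1 : ℂ) else 0) * (Q z y * star (Q z y)) := by
      have h1 : ∀ M : Matrix (Fin (l + 1) → Fin 2) (Fin (l + 1) → Fin 2) ℂ,
          (Matrix.single z z (1 : ℂ) * M).trace = M z z := by
        intro M
        simp [Matrix.trace, Matrix.diag, Matrix.mul_apply, Matrix.single, ite_and,
          Finset.sum_ite_eq, Finset.sum_ite_eq']
      rw [h1, hρ]
      simp [Matrix.mul_apply, Matrix.diagonal_apply, Matrix.conjTranspose_apply,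
        Finset.mul_sum, mul_ite, ite_mul, mul_zero, zero_mul, Finset.sum_ite_eq,
        Finset.sum_ite_eq', mul_comm, mul_assoc, mul_left_comm]
    have hR : ((Matrix.diagonal fun x : Fin (l + 1) → Fin 2 =>
          if x 0 = z 0 then (1 : ℂ) else 0) * (Q * ket00 * Qᴴ)).trace
        = ∑ y : Fin (l + 1) → Fin 2,
            (if y 0 = z 0 then (1 : ℂ) else 0) *
              (Q y (fun _ => 0) * star (Q y (fun _ => 0))) := by
      rw [hket00]
      simp [Matrix.trace, Matrix.diag, Matrix.mul_apply, Matrix.single,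
        Matrix.diagonal_apply, Matrix.conjTranspose_apply, ite_and,
        Finset.mul_sum, mul_ite, ite_mul, mul_zero, zero_mul, Finset.sum_ite_eq,
        Finset.sum_ite_eq', mul_comm]
    rw [hL, hR]
    congr 1
    -- sum equality via the bijection x ↦ z + x
    have hbij : Function.Bijective (fun x : Fin (l + 1) → Fin 2 => fun j => z j + x j) := by
      have hinv : ∀ a b : Fin 2, a + (a + b) = b := by decide
      exact Function.Involutive.bijective (fun x => funext fun j => hinv (z j) (x j))
    refine Fintype.sum_bijective _ hbij _ _ (fun x => ?_)
    have hQx : Q z x = Q (fun j => z j + x j) (fun _ => 0) := by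
      have := key z (fun _ => 0) x
      simpa using this
    have hcond : ((z 0 + x 0 = z 0) ↔ (x 0 = 0)) := by
      have : ∀ a b : Fin 2, (a + b = a) ↔ b = 0 := by decide
      exact this (z 0) (x 0)
    by_cases h : x 0 = 0
    · simp [h, hcond.2 h, ← hQx]
    · simp [h, fun hc => h (hcond.1 hc)]
  refine ⟨part1, fun z z' hzz' => ?_⟩
  rw [part1 z, part1 z', hzz']
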